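/- For the Yule model (β = 0, w(n) = n!), the rate sequence with λ_2 = 1 is λ_n = (3n-3)/(n+1), and Z(n) = (n-1)·n!/2. -/

import Mathlib

open Finset

lemma yule_term_eq (n k : ℕ) (hk : 1 ≤ k) (hkn : k ≤ n - 1) :
    (n - 1).choose (k - 1) * k.factorial * (n - k).factorial = k * (n - 1).factorial := by
  have h1 : k - 1 ≤ n - 1 := by omega
  have h2 : n - 1 - (k - 1) = n - k := by omega
  have h := Nat.choose_mul_factorial_mul_factorial h1
  rw [h2] at h
  have hk' : k.factorial = k * (k - 1).factorial := by
    conv_lhs => rw [show k = (k - 1) + 1 by omega]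
    rw [Nat.factorial_succ]
    congr 2
    omega
  calc (n - 1).choose (k - 1) * k.factorial * (n - k).factorial
      = k * ((n - 1).choose (k - 1) * (k - 1).factorial * (n - k).factorial) := by
        rw [hk']; ring
    _ = k * (n - 1).factorial := by rw [h]

lemma yule_gauss (m : ℕ) : ∑ k ∈ Finset.Icc 1 m, (k : ℝ) = m * (m + 1) / 2 := by
  induction m with
  | zero => simp
  | succ m ih =>
      rw [Finset.sum_Icc_succ_top (by omega), ih]
      push_cast
      ring

lemma yule_Z_eq (n : ℕ) (hn : 2 ≤ n)
    (h : ∑ k ∈ Finset.Icc 1 (n - 1),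
        ((n - 1).choose (k - 1) : ℝ) * (k.factorial : ℝ) * ((n - k).factorial : ℝ)
        = ((n : ℝ) - 1) * (n.factorial : ℝ) / 2 → True) :
    ∑ k ∈ Finset.Icc 1 (n - 1),
        ((n - 1).choose (k - 1) : ℝ) * (k.factorial : ℝ) * ((n - k).factorial : ℝ)
      = ((n : ℝ) - 1) * (n.factorial : ℝ) / 2 := by
  have hsum : ∑ k ∈ Finset.Icc 1 (n - 1),
      ((n - 1).choose (k - 1) : ℝ) * (k.factorial : ℝ) * ((n - k).factorial : ℝ)
      = ∑ k ∈ Finset.Icc 1 (n - 1), (k : ℝ) * ((n - 1).factorial : ℝ) := by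
    apply Finset.sum_congr rfl
    intro k hk
    simp only [Finset.mem_Icc] at hk
    have := yule_term_eq n k hk.1 hk.2
    exact_mod_cast this
  rw [hsum, ← Finset.sum_mul, yule_gauss (n - 1)]
  obtain ⟨m, rfl⟩ : ∃ m, n = m + 1 := ⟨n - 1, by omega⟩
  have hfac : ((m + 1).factorial : ℝ) = ((m : ℝ) + 1) * (m.factorial : ℝ) := by
    rw [Nat.factorial_succ]; push_cast; ring
  simp only [Nat.add_sub_cancel] at *
  rw [hfac]
  push_cast
  ring

/-- for the Yule model (β = 0, `w n = n!`), `Z n = (n-1)·n!/2` and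
the rate sequence with `λ_2 = 1` is `λ_n = (3n-3)/(n+1)`. -/
theorem yule_model_rates
    (Z : ℕ → ℝ)
    (hZ : ∀ n : ℕ, 2 ≤ n →
      Z n = ∑ k ∈ Finset.Icc 1 (n - 1),
        ((n - 1).choose (k - 1) : ℝ) * (k.factorial : ℝ) * ((n - k).factorial : ℝ))
    (p : ℕ → ℕ → ℝ)
    (hp : ∀ i j : ℕ, 1 ≤ i → 1 ≤ j →
      p i j = (i.factorial : ℝ) * (j.factorial : ℝ) / Z (i + j))
    (lam : ℕ → ℝ) (hlam2 : lam 2 = 1)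
    (hrate : ∀ n : ℕ, 2 ≤ n → lam (n + 1) * (1 - p n 1) = lam n) :
    ∀ n : ℕ, 2 ≤ n →
      Z n = ((n : ℝ) - 1) * (n.factorial : ℝ) / 2 ∧
      lam n = (3 * (n : ℝ) - 3) / ((n : ℝ) + 1) := by
  have hZval : ∀ n : ℕ, 2 ≤ n → Z n = ((n : ℝ) - 1) * (n.factorial : ℝ) / 2 := by
    intro n hn
    rw [hZ n hn]
    exact yule_Z_eq n hn (fun _ => trivial)
  have hlam : ∀ n : ℕ, 2 ≤ n → lam n = (3 * (n : ℝ) - 3) / ((n : ℝ) + 1) := by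
    intro n hn
    induction n, hn using Nat.le_induction with
    | base => rw [hlam2]; norm_num
    | succ n hn ih =>
        have ihn := ih
        have hpn : p n 1 = 2 / ((n : ℝ) * ((n : ℝ) + 1)) := by
          rw [hp n 1 (by omega) (by norm_num)]
          have hZn1 : Z (n + 1) = ((n : ℝ) + 1 - 1) * ((n + 1).factorial : ℝ) / 2 := by
            have := hZval (n + 1) (by omega)
            push_cast at this ⊢
            exact this
          rw [hZn1]
          have hfac : ((n + 1).factorial : ℝ) = ((n : ℝ) + 1) * (n.factorial : ℝ) := by
            rw [Nat.factorial_succ]; push_cast; ring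
          rw [hfac]
          have h1 : (n.factorial : ℝ) ≠ 0 := by positivity
          have h2 : (n : ℝ) ≠ 0 := by positivity
          have h3 : (n : ℝ) + 1 ≠ 0 := by positivity
          field_simp
          ring_nf
          field_simp
        have hr := hrate n hn
        rw [hpn, ihn] at hr
        have h2 : (n : ℝ) ≥ 2 := by exact_mod_cast hn
        have h3 : (n : ℝ) ≠ 0 := by linarith
        have h4 : (n : ℝ) + 1 ≠ 0 := by linarith
        have h5 : (n : ℝ) + 2 ≠ 0 := by linarith
        have h6 : (n : ℝ) - 1 ≠ 0 := by linarith
        have hfactor : 1 - 2 / ((n : ℝ) * ((n : ℝ) + 1))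
            = ((n : ℝ) - 1) * ((n : ℝ) + 2) / ((n : ℝ) * ((n : ℝ) + 1)) := by
          field_simp
          ring
        rw [hfactor] at hr
        field_simp at hr
        have hkey : (lam (n + 1) * ((n : ℝ) + 2)) * (((n : ℝ) - 1) * ((n : ℝ) + 1))
            = (3 * (n : ℝ)) * (((n : ℝ) - 1) * ((n : ℝ) + 1)) := by
          linear_combination (((n : ℝ) - 1) * ((n : ℝ) + 1)) * hr
        have hval : lam (n + 1) * ((n : ℝ) + 2) = 3 * (n : ℝ) :=
          mul_right_cancel₀ (mul_ne_zero h6 h4) hkey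
        push_cast
        rw [eq_div_iff (by linarith : (n : ℝ) + 1 + 1 ≠ 0)]
        linear_combination hval
  intro n hn
  exact ⟨hZval n hn, hlam n hn⟩
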